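/- Let Λ be a real inner product space and let g₀, g₁ : Λ → ℝ be twice differentiable with Hessians that are M-Lipschitz in operator norm. Fix λ₀ ∈ Λ and α > 0, and define λ₁ = λ₀ − α·∇g₀(λ₀), λ₂ = λ₁ − α·∇g₁(λ₁). Then the Reptile direction p = (1/α)·(λ₀ − λ₂) satisfies ‖p − (∇g₀(λ₀) + ∇g₁(λ₀) − α·(Hess g₁(λ₀)) (∇g₀(λ₀)))‖ ≤ (M/2)·α²·‖∇g₀(λ₀)‖². -/

import Mathlib

open RealInnerProductSpace

open Set in
/-- Quadratic Taylor remainder bound for a function with Lipschitz derivative. -/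
lemma taylor_quadratic {Λ E : Type*} [NormedAddCommGroup Λ] [NormedSpace ℝ Λ]
    [NormedAddCommGroup E] [NormedSpace ℝ E]
    (f : Λ → E) (f' : Λ → (Λ →L[ℝ] E)) (M : ℝ)
    (hf : ∀ x, HasFDerivAt f (f' x) x)
    (hLip : ∀ u v : Λ, ‖f' u - f' v‖ ≤ M * ‖u - v‖)
    (x y : Λ) :
    ‖f y - f x - f' x (y - x)‖ ≤ M / 2 * ‖y - x‖ ^ 2 := by
  set v := y - x with hv
  set φ : ℝ → E := fun t => f (x + t • v) - t • (f' x v) - f x with hφ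
  have hline : ∀ t : ℝ, HasDerivAt (fun t : ℝ => x + t • v) v t := by
    intro t
    simpa using ((hasDerivAt_id t).smul_const v).const_add x
  have hφ' : ∀ t : ℝ, HasDerivAt φ (f' (x + t • v) v - f' x v) t := by
    intro t
    have h1 : HasDerivAt (fun t : ℝ => f (x + t • v)) (f' (x + t • v) v) t := by
      exact (hf (x + t • v)).comp_hasDerivAt t (hline t)
    have h2 : HasDerivAt (fun t : ℝ => t • (f' x v)) (f' x v) t := by
      simpa using (hasDerivAt_id t).smul_const (f' x v)
    exact (h1.sub h2).sub_const (f x)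
  have hB : ∀ t : ℝ, HasDerivAt (fun t => M / 2 * ‖v‖ ^ 2 * t ^ 2) (M * ‖v‖ ^ 2 * t) t := by
    intro t
    have := (hasDerivAt_pow 2 t).const_mul (M / 2 * ‖v‖ ^ 2)
    refine this.congr_deriv ?_
    ring
  have key : ∀ t ∈ Icc (0:ℝ) 1, ‖φ t‖ ≤ M / 2 * ‖v‖ ^ 2 * t ^ 2 := by
    refine image_norm_le_of_norm_deriv_right_le_deriv_boundary
      (f := φ) (f' := fun t => f' (x + t • v) v - f' x v) (a := 0) (b := 1)
      (fun t _ => (hφ' t).continuousAt.continuousWithinAt)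
      (fun t _ => (hφ' t).hasDerivWithinAt) ?_ hB ?_
    · simp [hφ]
    · intro t ht
      have h1 : ‖f' (x + t • v) v - f' x v‖ ≤ ‖f' (x + t • v) - f' x‖ * ‖v‖ := by
        simpa using (f' (x + t • v) - f' x).le_opNorm v
      have h2 : ‖f' (x + t • v) - f' x‖ ≤ M * (t * ‖v‖) := by
        have := hLip (x + t • v) x
        simpa [norm_smul, abs_of_nonneg ht.1] using this
      calc ‖f' (x + t • v) v - f' x v‖ ≤ M * (t * ‖v‖) * ‖v‖ := by
            refine h1.trans ?_
            exact mul_le_mul_of_nonneg_right h2 (norm_nonneg v)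
        _ = M * ‖v‖ ^ 2 * t := by ring
  have h1 := key 1 ⟨zero_le_one, le_refl 1⟩
  have hx1 : x + (1:ℝ) • v = y := by rw [one_smul, hv]; abel
  have hφ1 : φ 1 = f y - f x - f' x v := by
    show f (x + (1:ℝ) • v) - (1:ℝ) • f' x v - f x = _
    rw [hx1, one_smul]; abel
  rw [hφ1] at h1
  simpa using h1

/-- The Reptile direction after two SGD steps approximates, up to an `O(α²)`
Taylor error, the gradient step `∇g₀(λ₀) + ∇g₁(λ₀) − α·Hess g₁(λ₀) ∇g₀(λ₀)`. -/
theorem reptile_direction_approx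
    {Λ : Type*} [NormedAddCommGroup Λ] [InnerProductSpace ℝ Λ] [CompleteSpace Λ]
    (g₀ g₁ : Λ → ℝ) (H₀ H₁ : Λ → (Λ →L[ℝ] Λ)) (M : ℝ)
    (hH₀ : ∀ x, HasFDerivAt (gradient g₀) (H₀ x) x)
    (hH₁ : ∀ x, HasFDerivAt (gradient g₁) (H₁ x) x)
    (hLip₀ : ∀ u v : Λ, ‖H₀ u - H₀ v‖ ≤ M * ‖u - v‖)
    (hLip₁ : ∀ u v : Λ, ‖H₁ u - H₁ v‖ ≤ M * ‖u - v‖)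
    (lam₀ : Λ) (α : ℝ) (hα : 0 < α) (lam₁ lam₂ p : Λ)
    (h₁ : lam₁ = lam₀ - α • gradient g₀ lam₀)
    (h₂ : lam₂ = lam₁ - α • gradient g₁ lam₁)
    (hp : p = (1 / α) • (lam₀ - lam₂)) :
    ‖p - (gradient g₀ lam₀ + gradient g₁ lam₀
        - α • (H₁ lam₀ (gradient g₀ lam₀)))‖ ≤
      (M / 2) * α ^ 2 * ‖gradient g₀ lam₀‖ ^ 2 := by
  have hα' : α ≠ 0 := ne_of_gt hα
  have hpval : p = gradient g₀ lam₀ + gradient g₁ lam₁ := by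
    rw [hp, h₂, h₁]
    match_scalars <;> field_simp <;> ring
  have hsub : lam₁ - lam₀ = -(α • gradient g₀ lam₀) := by rw [h₁]; abel
  have happ : H₁ lam₀ (lam₁ - lam₀) = -(α • H₁ lam₀ (gradient g₀ lam₀)) := by
    rw [hsub, map_neg, map_smul]
  have hdiff : p - (gradient g₀ lam₀ + gradient g₁ lam₀
      - α • (H₁ lam₀ (gradient g₀ lam₀)))
      = gradient g₁ lam₁ - gradient g₁ lam₀ - H₁ lam₀ (lam₁ - lam₀) := by
    rw [hpval, happ]
    abel
  rw [hdiff]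
  have := taylor_quadratic (gradient g₁) H₁ M hH₁ hLip₁ lam₀ lam₁
  refine this.trans (le_of_eq ?_)
  rw [hsub, norm_neg, norm_smul, Real.norm_eq_abs, abs_of_pos hα]
  rw [mul_pow]
  ring
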